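/- The graph G_1 = mK_1 * nK_1 * mK_1 (two independent sets of size m whose vertices are all joined to an independent set of size n in the middle, with no other edges) is quasi-λ-distance-balanced with λ = 2m/n if 2m > n, and λ = n/(2m) if 2m < n; it is distance-balanced iff n = 2m. -/

import Mathlib

open SimpleGraph

/-- `wSet G u v` is the set of vertices strictly closer to `u` than to `v`. -/
def wSet {V : Type*} (G : SimpleGraph V) (u v : V) : Set V :=
  {x | G.dist x u < G.dist x v}

/-- `G` is quasi-`lam`-distance-balanced. -/
def QuasiDB {V : Type*} (G : SimpleGraph V) (lam : ℚ) : Prop :=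
  ∀ u v : V, G.Adj u v →
    ((wSet G u v).ncard : ℚ) = lam * ((wSet G v u).ncard : ℚ) ∨
    ((wSet G v u).ncard : ℚ) = lam * ((wSet G u v).ncard : ℚ)

/-- `G` is distance-balanced. -/
def DistBalanced {V : Type*} (G : SimpleGraph V) : Prop :=
  ∀ u v : V, G.Adj u v → (wSet G u v).ncard = (wSet G v u).ncard

/-- Membership in the middle part of `Fin m ⊕ Fin n ⊕ Fin m`. -/
def isMid {m n : ℕ} : Fin m ⊕ Fin n ⊕ Fin m → Prop :=
  fun v => match v with
  | .inr (.inl _) => True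
  | _ => False

/-- The graph `G₁ = mK₁ * nK₁ * mK₁`: two independent sets of size `m`, each of
whose vertices is joined to every vertex of a middle independent set of size
`n`, with no other edges. -/
def G1 (m n : ℕ) : SimpleGraph (Fin m ⊕ Fin n ⊕ Fin m) where
  Adj x y := (isMid x ∧ ¬ isMid y) ∨ (isMid y ∧ ¬ isMid x)
  symm := by tauto
  loopless := by constructor; intro x h; tauto

lemma mid_set_eq (m n : ℕ) :
    {x : Fin m ⊕ Fin n ⊕ Fin m | isMid x}
      = Set.range (fun i : Fin n => (Sum.inr (Sum.inl i) : Fin m ⊕ Fin n ⊕ Fin m)) := by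
  ext x
  rcases x with a | b | c <;> simp [isMid]

lemma nonmid_set_eq (m n : ℕ) :
    {x : Fin m ⊕ Fin n ⊕ Fin m | ¬ isMid x}
      = Set.range (fun i : Fin m ⊕ Fin m =>
          (Sum.elim Sum.inl (fun a => Sum.inr (Sum.inr a)) i : Fin m ⊕ Fin n ⊕ Fin m)) := by
  ext x
  rcases x with a | b | c
  · simpa [isMid] using ⟨Sum.inl a, rfl⟩
  · simp [isMid]
  · simpa [isMid] using ⟨Sum.inr c, rfl⟩

lemma mid_ncard (m n : ℕ) :
    ({x : Fin m ⊕ Fin n ⊕ Fin m | isMid x}).ncard = n := by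
  rw [mid_set_eq, Set.ncard_eq_toFinset_card', Set.toFinset_range]
  rw [Finset.card_image_of_injective _ (fun a b h => by simpa using h)]
  simp

lemma nonmid_ncard (m n : ℕ) :
    ({x : Fin m ⊕ Fin n ⊕ Fin m | ¬ isMid x}).ncard = 2 * m := by
  rw [nonmid_set_eq, Set.ncard_eq_toFinset_card', Set.toFinset_range]
  rw [Finset.card_image_of_injective _ ?_]
  · simp; ring
  · rintro (a | a) (b | b) h <;> simp_all

lemma dist_two (m n : ℕ) (hm : 1 ≤ m) (hn : 1 ≤ n) (x y : Fin m ⊕ Fin n ⊕ Fin m)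
    (hne : x ≠ y) (hadj : ¬ (G1 m n).Adj x y) : (G1 m n).dist x y = 2 := by
  have hmid : isMid x ↔ isMid y := by
    simp only [G1, not_or, not_and, not_not] at hadj; tauto
  obtain ⟨w, hw1, hw2⟩ : ∃ w, (G1 m n).Adj x w ∧ (G1 m n).Adj w y := by
    by_cases h : isMid x
    · exact ⟨Sum.inl ⟨0, hm⟩, Or.inl ⟨h, by simp [isMid]⟩,
        Or.inr ⟨hmid.mp h, by simp [isMid]⟩⟩
    · exact ⟨Sum.inr (Sum.inl ⟨0, hn⟩), Or.inr ⟨by simp [isMid], h⟩,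
        Or.inl ⟨by simp [isMid], fun hy => h (hmid.mpr hy)⟩⟩
  have hle : (G1 m n).dist x y ≤ 2 := by
    have := SimpleGraph.dist_le (Walk.cons hw1 (Walk.cons hw2 Walk.nil))
    simpa using this
  have hreach : (G1 m n).Reachable x y := ⟨Walk.cons hw1 (Walk.cons hw2 Walk.nil)⟩
  have hpos : 0 < (G1 m n).dist x y := hreach.pos_dist_of_ne hne
  have hone : (G1 m n).dist x y ≠ 1 := fun h =>
    hadj ((SimpleGraph.dist_eq_one_iff_adj).mp h)
  omega

lemma wset_eq (m n : ℕ) (hm : 1 ≤ m) (hn : 1 ≤ n) (u v : Fin m ⊕ Fin n ⊕ Fin m)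
    (hu : isMid u) (hv : ¬ isMid v) :
    wSet (G1 m n) u v = insert u ({x | ¬ isMid x} \ {v}) := by
  have hadj : (G1 m n).Adj u v := Or.inl ⟨hu, hv⟩
  ext x
  simp only [wSet, Set.mem_setOf_eq, Set.mem_insert_iff, Set.mem_diff,
    Set.mem_singleton_iff]
  constructor
  · intro h
    by_contra hc
    push_neg at hc
    obtain ⟨hxu, hx⟩ := hc
    by_cases hxv : x = v
    · subst hxv
      rw [SimpleGraph.dist_self] at h
      omega
    by_cases hxm : isMid x
    · have h1 : (G1 m n).dist x v = 1 :=
        (SimpleGraph.dist_eq_one_iff_adj).mpr (Or.inl ⟨hxm, hv⟩)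
      have h2 : (G1 m n).dist x u = 2 := by
        apply dist_two m n hm hn x u hxu
        simp only [G1, not_or, not_and, not_not]; tauto
      omega
    · exact absurd (hx hxm) hxv
  · rintro (rfl | ⟨hx, hxv⟩)
    · rw [SimpleGraph.dist_self, (SimpleGraph.dist_eq_one_iff_adj).mpr hadj]
      omega
    · have h1 : (G1 m n).dist x u = 1 :=
        (SimpleGraph.dist_eq_one_iff_adj).mpr (Or.inr ⟨hu, hx⟩)
      have h2 : (G1 m n).dist x v = 2 := by
        apply dist_two m n hm hn x v hxv
        simp only [G1, not_or, not_and, not_not]; tauto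
      omega

lemma wset_card (m n : ℕ) (hm : 1 ≤ m) (hn : 1 ≤ n) (u v : Fin m ⊕ Fin n ⊕ Fin m)
    (hu : isMid u) (hv : ¬ isMid v) :
    (wSet (G1 m n) u v).ncard = 2 * m := by
  rw [wset_eq m n hm hn u v hu hv]
  have hfin : ({x : Fin m ⊕ Fin n ⊕ Fin m | ¬ isMid x} \ {v}).Finite :=
    Set.toFinite _
  rw [Set.ncard_insert_of_notMem (by simp [hu]) hfin]
  rw [Set.ncard_diff_singleton_of_mem (by simpa using hv)]
  rw [nonmid_ncard]
  omega

lemma wset_card' (m n : ℕ) (hm : 1 ≤ m) (hn : 1 ≤ n) (u v : Fin m ⊕ Fin n ⊕ Fin m)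
    (hu : isMid u) (hv : ¬ isMid v) :
    (wSet (G1 m n) v u).ncard = n := by
  have heq : wSet (G1 m n) v u = insert v ({x | isMid x} \ {u}) := by
    have hadj : (G1 m n).Adj u v := Or.inl ⟨hu, hv⟩
    ext x
    simp only [wSet, Set.mem_setOf_eq, Set.mem_insert_iff, Set.mem_diff,
      Set.mem_singleton_iff]
    constructor
    · intro h
      by_contra hc
      push_neg at hc
      obtain ⟨hxv, hx⟩ := hc
      by_cases hxu : x = u
      · subst hxu
        rw [SimpleGraph.dist_self] at h
        omega
      by_cases hxm : isMid x
      · exact absurd (hx hxm) hxu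
      · have h1 : (G1 m n).dist x u = 1 :=
          (SimpleGraph.dist_eq_one_iff_adj).mpr (Or.inr ⟨hu, hxm⟩)
        have h2 : (G1 m n).dist x v = 2 := by
          apply dist_two m n hm hn x v hxv
          simp only [G1, not_or, not_and, not_not]; tauto
        omega
    · rintro (rfl | ⟨hx, hxu⟩)
      · rw [SimpleGraph.dist_self, (SimpleGraph.dist_eq_one_iff_adj).mpr hadj.symm]
        omega
      · have h1 : (G1 m n).dist x v = 1 :=
          (SimpleGraph.dist_eq_one_iff_adj).mpr (Or.inl ⟨hx, hv⟩)
        have h2 : (G1 m n).dist x u = 2 := by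
          apply dist_two m n hm hn x u hxu
          simp only [G1, not_or, not_and, not_not]; tauto
        omega
  rw [heq]
  rw [Set.ncard_insert_of_notMem (by simp [hv]) (Set.toFinite _)]
  rw [Set.ncard_diff_singleton_of_mem (by simpa using hu)]
  rw [mid_ncard]
  omega

/-- `G₁ = mK₁ * nK₁ * mK₁` is quasi-`2m/n`-DB if `2m > n`, quasi-`n/2m`-DB if
`2m < n`, and distance-balanced iff `n = 2m`. -/
theorem stmt15 (m n : ℕ) (hm : 1 ≤ m) (hn : 1 ≤ n) :
    (n < 2 * m → QuasiDB (G1 m n) ((2 * m : ℚ) / n)) ∧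
    (2 * m < n → QuasiDB (G1 m n) ((n : ℚ) / (2 * m))) ∧
    (DistBalanced (G1 m n) ↔ n = 2 * m) := by
  have hn0 : (n : ℚ) ≠ 0 := Nat.cast_ne_zero.mpr (by omega)
  have hm0 : (2 * m : ℚ) ≠ 0 := by
    have : (m : ℚ) ≠ 0 := Nat.cast_ne_zero.mpr (by omega)
    positivity
  have key : ∀ u v, (G1 m n).Adj u v →
      ((wSet (G1 m n) u v).ncard = 2 * m ∧ (wSet (G1 m n) v u).ncard = n) ∨
      ((wSet (G1 m n) u v).ncard = n ∧ (wSet (G1 m n) v u).ncard = 2 * m) := by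
    intro u v hadj
    rcases hadj with ⟨hu, hv⟩ | ⟨hv, hu⟩
    · exact Or.inl ⟨wset_card m n hm hn u v hu hv, wset_card' m n hm hn u v hu hv⟩
    · exact Or.inr ⟨wset_card' m n hm hn v u hv hu, wset_card m n hm hn v u hv hu⟩
  refine ⟨fun _ u v hadj => ?_, fun _ u v hadj => ?_, ?_⟩
  · rcases key u v hadj with ⟨h1, h2⟩ | ⟨h1, h2⟩
    · left; rw [h1, h2]; field_simp; norm_num
    · right; rw [h1, h2]; field_simp; norm_num
  · rcases key u v hadj with ⟨h1, h2⟩ | ⟨h1, h2⟩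
    · right; rw [h1, h2]; field_simp; norm_num
    · left; rw [h1, h2]; field_simp; norm_num
  · constructor
    · intro hdb
      have hadj : (G1 m n).Adj (Sum.inr (Sum.inl ⟨0, hn⟩)) (Sum.inl ⟨0, hm⟩) :=
        Or.inl ⟨by simp [isMid], by simp [isMid]⟩
      have := hdb _ _ hadj
      rw [wset_card m n hm hn _ _ (by simp [isMid]) (by simp [isMid]),
        wset_card' m n hm hn _ _ (by simp [isMid]) (by simp [isMid])] at this
      omega
    · intro hne u v hadj
      rcases key u v hadj with ⟨h1, h2⟩ | ⟨h1, h2⟩ <;> omega
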